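/- With α = 1.55, for all real a, b, r ≥ 0 with a ≤ b ≤ r, a + b + r ≤ 1, and r ≤ 0.9, we have 3a^α + b^α + r^α < 0.92. -/
import Mathlib


lemma pb {x c : ℝ} (hx : 0 ≤ x) (hc : 0 < c) (h : x^(31:ℕ) < c^(20:ℕ)) : x ^ (1.55:ℝ) < c := by
  have h1 : x ^ (1.55:ℝ) = (x ^ (31:ℕ)) ^ ((20:ℝ)⁻¹) := by
    rw [← Real.rpow_natCast x 31, ← Real.rpow_mul hx]; norm_num
  have h2 : c = (c ^ (20:ℕ)) ^ ((20:ℝ)⁻¹) := by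
    rw [← Real.rpow_natCast c 20, ← Real.rpow_mul hc.le]; norm_num
  rw [h1]; conv_rhs => rw [h2]
  exact Real.rpow_lt_rpow (by positivity) h (by norm_num)

lemma convA {u v p q : ℝ} (h : ∀ x ∈ Set.Icc p q, (0:ℝ) ≤ u + v * x) :
    ConvexOn ℝ (Set.Icc p q) (fun x => (u + v * x) ^ (1.55:ℝ)) := by
  refine ⟨convex_Icc p q, fun x hx y hy c d hc hd hcd => ?_⟩
  have hx' := h x hx
  have hy' := h y hy
  have key := (convexOn_rpow (p := 1.55) (by norm_num)).2 (Set.mem_Ici.2 hx')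
    (Set.mem_Ici.2 hy') hc hd hcd
  simp only [smul_eq_mul] at key ⊢
  have e : u + v * (c*x + d*y) = c*(u+v*x) + d*(u+v*y) := by linear_combination (-u) * hcd
  rw [e]; exact key

lemma conv2 {p q c1 c2 u1 v1 u2 v2 K : ℝ} (hc1 : 0 ≤ c1) (hc2 : 0 ≤ c2)
    (h1 : ∀ x ∈ Set.Icc p q, (0:ℝ) ≤ u1 + v1 * x) (h2 : ∀ x ∈ Set.Icc p q, (0:ℝ) ≤ u2 + v2 * x) :
    ConvexOn ℝ (Set.Icc p q)
      (fun x => c1 * (u1 + v1 * x) ^ (1.55:ℝ) + c2 * (u2 + v2 * x) ^ (1.55:ℝ) + K) := by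
  refine ⟨convex_Icc _ _, fun x hx y hy c d hc hd hcd => ?_⟩
  have A1 := (convA h1).2 hx hy hc hd hcd
  have A2 := (convA h2).2 hx hy hc hd hcd
  simp only [smul_eq_mul] at A1 A2 ⊢
  have B1 := mul_le_mul_of_nonneg_left A1 hc1
  have B2 := mul_le_mul_of_nonneg_left A2 hc2
  have hK : c * K + d * K = K := by rw [← add_mul, hcd, one_mul]
  nlinarith [B1, B2, hK]

lemma maxseg {f : ℝ → ℝ} {p q x M : ℝ} (hpq : p ≤ q) (hf : ConvexOn ℝ (Set.Icc p q) f)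
    (hx : x ∈ Set.Icc p q) (h1 : f p < M) (h2 : f q < M) : f x < M := by
  have := hf.le_on_segment (Set.left_mem_Icc.2 hpq) (Set.right_mem_Icc.2 hpq)
    (by rwa [segment_eq_Icc hpq])
  exact lt_of_le_of_lt this (max_lt h1 h2)

set_option maxHeartbeats 1600000 in
/-- Claim 1 of the ternary tree analysis (α = 1.55, normalized). -/
theorem stmt8 (α : ℝ) (hα : α = 1.55) :
    ∀ a b r : ℝ, 0 ≤ a → 0 ≤ b → 0 ≤ r → a ≤ b → b ≤ r → a + b + r ≤ 1 → r ≤ 0.9 →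
      3 * a ^ α + b ^ α + r ^ α < 0.92 := by
  subst hα
  intro a b r ha hb0 hr0 hab hbr hsum hr9
  have N1 : ((1:ℝ)/3) ^ (1.55:ℝ) < 0.184 := pb (by norm_num) (by norm_num) (by norm_num)
  have N2 : ((0.9:ℝ)) ^ (1.55:ℝ) < 0.87 := pb (by norm_num) (by norm_num) (by norm_num)
  have N3 : ((0.1:ℝ)) ^ (1.55:ℝ) < 0.029 := pb (by norm_num) (by norm_num) (by norm_num)
  have N4 : ((0.05:ℝ)) ^ (1.55:ℝ) < 0.012 := pb (by norm_num) (by norm_num) (by norm_num)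
  have N5 : ((1:ℝ)/2) ^ (1.55:ℝ) < 0.46 := pb (by norm_num) (by norm_num) (by norm_num)
  by_cases hr3 : r ≤ 1/3
  · have h5 : ∀ x:ℝ, 0 ≤ x → x ≤ r → x^(1.55:ℝ) ≤ ((1:ℝ)/3)^(1.55:ℝ) := fun x hx hxr =>
      Real.rpow_le_rpow hx (by linarith) (by norm_num)
    have ha' := h5 a ha (le_trans hab hbr)
    have hb' := h5 b hb0 hbr
    have hr' := h5 r hr0 le_rfl
    linarith
  · push_neg at hr3
    have hr13 : (1/3:ℝ) ≤ r := hr3.le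
    have hr87 : r ^ (1.55:ℝ) < 0.87 :=
      lt_of_le_of_lt (Real.rpow_le_rpow hr0 hr9 (by norm_num)) N2
    -- φ bound
    have hφ : ∀ s:ℝ, 1/3 ≤ s → s ≤ 0.9 →
        4*((1-s)/2)^(1.55:ℝ) + s^(1.55:ℝ) < 0.92 := by
      intro s hs1 hs2
      have hp' : (4:ℝ)*((1:ℝ)/2 + (-(1/2))*(1/3:ℝ))^(1.55:ℝ)
          + 1*((0:ℝ)+1*(1/3:ℝ))^(1.55:ℝ) + 0 < 0.92 := by
        rw [show (1:ℝ)/2 + (-(1/2))*(1/3:ℝ) = 1/3 by norm_num,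
          show (0:ℝ)+1*(1/3:ℝ) = 1/3 by norm_num]
        linarith
      have hq' : (4:ℝ)*((1:ℝ)/2 + (-(1/2))*(0.9:ℝ))^(1.55:ℝ)
          + 1*((0:ℝ)+1*(0.9:ℝ))^(1.55:ℝ) + 0 < 0.92 := by
        rw [show (1:ℝ)/2 + (-(1/2))*(0.9:ℝ) = 0.05 by norm_num,
          show (0:ℝ)+1*(0.9:ℝ) = 0.9 by norm_num]
        linarith
      have H := maxseg
        (f := fun x => 4*((1:ℝ)/2 + (-(1/2))*x)^(1.55:ℝ) + 1*((0:ℝ)+1*x)^(1.55:ℝ) + 0)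
        (by norm_num : (1/3:ℝ) ≤ 0.9)
        (conv2 (by norm_num) (by norm_num)
          (fun x hx => by have := hx.2; norm_num at this ⊢; linarith)
          (fun x hx => by have := hx.1; norm_num at this ⊢; linarith))
        (Set.mem_Icc.2 ⟨hs1, hs2⟩) hp' hq'
      have H' : (4:ℝ)*((1:ℝ)/2 + (-(1/2))*s)^(1.55:ℝ)
          + 1*((0:ℝ)+1*s)^(1.55:ℝ) + 0 < 0.92 := H
      rw [show (1:ℝ)/2 + (-(1/2))*s = (1-s)/2 by ring, show (0:ℝ)+1*s = s by ring] at H'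
      linarith
    -- χ bound
    have hχ : ∀ s:ℝ, 1/2 ≤ s → s ≤ 0.9 →
        (1-s)^(1.55:ℝ) + s^(1.55:ℝ) < 0.92 := by
      intro s hs1 hs2
      have hp' : (1:ℝ)*((1:ℝ) + (-1)*(1/2:ℝ))^(1.55:ℝ)
          + 1*((0:ℝ)+1*(1/2:ℝ))^(1.55:ℝ) + 0 < 0.92 := by
        rw [show (1:ℝ) + (-1)*(1/2:ℝ) = 1/2 by norm_num,
          show (0:ℝ)+1*(1/2:ℝ) = 1/2 by norm_num]
        linarith
      have hq' : (1:ℝ)*((1:ℝ) + (-1)*(0.9:ℝ))^(1.55:ℝ)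
          + 1*((0:ℝ)+1*(0.9:ℝ))^(1.55:ℝ) + 0 < 0.92 := by
        rw [show (1:ℝ) + (-1)*(0.9:ℝ) = 0.1 by norm_num,
          show (0:ℝ)+1*(0.9:ℝ) = 0.9 by norm_num]
        linarith
      have H := maxseg
        (f := fun x => 1*((1:ℝ) + (-1)*x)^(1.55:ℝ) + 1*((0:ℝ)+1*x)^(1.55:ℝ) + 0)
        (by norm_num : (1/2:ℝ) ≤ 0.9)
        (conv2 (by norm_num) (by norm_num)
          (fun x hx => by have := hx.2; norm_num at this ⊢; linarith)
          (fun x hx => by have := hx.1; norm_num at this ⊢; linarith))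
        (Set.mem_Icc.2 ⟨hs1, hs2⟩) hp' hq'
      have H' : (1:ℝ)*((1:ℝ) + (-1)*s)^(1.55:ℝ)
          + 1*((0:ℝ)+1*s)^(1.55:ℝ) + 0 < 0.92 := H
      rw [show (1:ℝ) + (-1)*s = 1-s by ring, show (0:ℝ)+1*s = s by ring] at H'
      linarith
    -- ψ bound
    have hψ : ∀ s:ℝ, 1/3 ≤ s → s ≤ 1/2 →
        3*(1-2*s)^(1.55:ℝ) + 2*s^(1.55:ℝ) < 0.92 := by
      intro s hs1 hs2
      have hp' : (3:ℝ)*((1:ℝ) + (-2)*(1/3:ℝ))^(1.55:ℝ)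
          + 2*((0:ℝ)+1*(1/3:ℝ))^(1.55:ℝ) + 0 < 0.92 := by
        rw [show (1:ℝ) + (-2)*(1/3:ℝ) = 1/3 by norm_num,
          show (0:ℝ)+1*(1/3:ℝ) = 1/3 by norm_num]
        linarith
      have hq' : (3:ℝ)*((1:ℝ) + (-2)*(1/2:ℝ))^(1.55:ℝ)
          + 2*((0:ℝ)+1*(1/2:ℝ))^(1.55:ℝ) + 0 < 0.92 := by
        rw [show (1:ℝ) + (-2)*(1/2:ℝ) = 0 by norm_num,
          show (0:ℝ)+1*(1/2:ℝ) = 1/2 by norm_num,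
          Real.zero_rpow (by norm_num : (1.55:ℝ) ≠ 0)]
        linarith
      have H := maxseg
        (f := fun x => 3*((1:ℝ) + (-2)*x)^(1.55:ℝ) + 2*((0:ℝ)+1*x)^(1.55:ℝ) + 0)
        (by norm_num : (1/3:ℝ) ≤ 1/2)
        (conv2 (by norm_num) (by norm_num)
          (fun x hx => by have := hx.2; norm_num at this ⊢; linarith)
          (fun x hx => by have := hx.1; norm_num at this ⊢; linarith))
        (Set.mem_Icc.2 ⟨hs1, hs2⟩) hp' hq'
      have H' : (3:ℝ)*((1:ℝ) + (-2)*s)^(1.55:ℝ)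
          + 2*((0:ℝ)+1*s)^(1.55:ℝ) + 0 < 0.92 := H
      rw [show (1:ℝ) + (-2)*s = 1-2*s by ring, show (0:ℝ)+1*s = s by ring] at H'
      linarith
    -- A1 : case a = 0
    have hA1 : b^(1.55:ℝ) + r^(1.55:ℝ) < 0.92 := by
      have hp' : (1:ℝ)*((0:ℝ)+1*(0:ℝ))^(1.55:ℝ) + 0*((0:ℝ)+0*(0:ℝ))^(1.55:ℝ)
          + r^(1.55:ℝ) < 0.92 := by
        rw [show (0:ℝ)+1*(0:ℝ) = 0 by ring,
          Real.zero_rpow (by norm_num : (1.55:ℝ) ≠ 0)]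
        linarith
      have hq' : (1:ℝ)*((0:ℝ)+1*(min r (1-r)))^(1.55:ℝ)
          + 0*((0:ℝ)+0*(min r (1-r)))^(1.55:ℝ) + r^(1.55:ℝ) < 0.92 := by
        rw [show (0:ℝ)+1*(min r (1-r)) = min r (1-r) by ring]
        rcases min_cases r (1-r) with ⟨m1, m2⟩ | ⟨m1, m2⟩
        · rw [m1]
          have : r^(1.55:ℝ) ≤ ((1:ℝ)/2)^(1.55:ℝ) :=
            Real.rpow_le_rpow hr0 (by linarith) (by norm_num)
          linarith
        · rw [m1]
          have := hχ r (by linarith) hr9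
          linarith
      have H := maxseg
        (f := fun x => 1*((0:ℝ)+1*x)^(1.55:ℝ) + 0*((0:ℝ)+0*x)^(1.55:ℝ) + r^(1.55:ℝ))
        (le_min hr0 (by linarith) : (0:ℝ) ≤ min r (1-r))
        (conv2 (by norm_num) (by norm_num)
          (fun x hx => by have := hx.1; norm_num at this ⊢; linarith)
          (fun x hx => by norm_num))
        (Set.mem_Icc.2 ⟨hb0, le_min hbr (by linarith)⟩) hp' hq'
      have H' : (1:ℝ)*((0:ℝ)+1*b)^(1.55:ℝ) + 0*((0:ℝ)+0*b)^(1.55:ℝ)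
          + r^(1.55:ℝ) < 0.92 := H
      rw [show (0:ℝ)+1*b = b by ring] at H'
      linarith
    -- A2a : 4 b^α + r^α when 2b ≤ 1-r
    have hA2a : ∀ s:ℝ, 0 ≤ s → s ≤ (1-r)/2 → 4*s^(1.55:ℝ) + r^(1.55:ℝ) < 0.92 := by
      intro s hs1 hs2
      have hp' : (4:ℝ)*((0:ℝ)+1*(0:ℝ))^(1.55:ℝ) + 0*((0:ℝ)+0*(0:ℝ))^(1.55:ℝ)
          + r^(1.55:ℝ) < 0.92 := by
        rw [show (0:ℝ)+1*(0:ℝ) = 0 by ring,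
          Real.zero_rpow (by norm_num : (1.55:ℝ) ≠ 0)]
        linarith
      have hq' : (4:ℝ)*((0:ℝ)+1*((1-r)/2))^(1.55:ℝ) + 0*((0:ℝ)+0*((1-r)/2))^(1.55:ℝ)
          + r^(1.55:ℝ) < 0.92 := by
        rw [show (0:ℝ)+1*((1-r)/2) = (1-r)/2 by ring]
        have := hφ r hr13 hr9
        linarith
      have H := maxseg
        (f := fun x => 4*((0:ℝ)+1*x)^(1.55:ℝ) + 0*((0:ℝ)+0*x)^(1.55:ℝ) + r^(1.55:ℝ))
        (by linarith : (0:ℝ) ≤ (1-r)/2)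
        (conv2 (by norm_num) (by norm_num)
          (fun x hx => by have := hx.1; norm_num at this ⊢; linarith)
          (fun x hx => by norm_num))
        (Set.mem_Icc.2 ⟨hs1, hs2⟩) hp' hq'
      have H' : (4:ℝ)*((0:ℝ)+1*s)^(1.55:ℝ) + 0*((0:ℝ)+0*s)^(1.55:ℝ)
          + r^(1.55:ℝ) < 0.92 := H
      rw [show (0:ℝ)+1*s = s by ring] at H'
      linarith
    -- A2b : 3(1-s-r)^α + s^α + r^α for (1-r)/2 ≤ s ≤ min r (1-r)
    have hA2b : ∀ s:ℝ, (1-r)/2 ≤ s → s ≤ min r (1-r) →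
        3*(1-s-r)^(1.55:ℝ) + s^(1.55:ℝ) + r^(1.55:ℝ) < 0.92 := by
      intro s hs1 hs2
      have hp' : (3:ℝ)*((1-r)+(-1)*((1-r)/2))^(1.55:ℝ) + 1*((0:ℝ)+1*((1-r)/2))^(1.55:ℝ)
          + r^(1.55:ℝ) < 0.92 := by
        rw [show (1-r)+(-1)*((1-r)/2) = (1-r)/2 by ring,
          show (0:ℝ)+1*((1-r)/2) = (1-r)/2 by ring]
        have := hφ r hr13 hr9
        linarith
      have hq' : (3:ℝ)*((1-r)+(-1)*(min r (1-r)))^(1.55:ℝ)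
          + 1*((0:ℝ)+1*(min r (1-r)))^(1.55:ℝ) + r^(1.55:ℝ) < 0.92 := by
        rw [show (0:ℝ)+1*(min r (1-r)) = min r (1-r) by ring]
        rcases min_cases r (1-r) with ⟨m1, m2⟩ | ⟨m1, m2⟩
        · rw [m1, show (1-r)+(-1)*r = 1-2*r by ring]
          have := hψ r hr13 (by linarith)
          linarith
        · rw [m1, show (1-r)+(-1)*(1-r) = 0 by ring,
            Real.zero_rpow (by norm_num : (1.55:ℝ) ≠ 0)]
          have := hχ r (by linarith) hr9
          linarith
      have H := maxseg
        (f := fun x => 3*((1-r)+(-1)*x)^(1.55:ℝ) + 1*((0:ℝ)+1*x)^(1.55:ℝ) + r^(1.55:ℝ))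
        (le_min (by linarith) (by linarith) : (1-r)/2 ≤ min r (1-r))
        (conv2 (by norm_num) (by norm_num)
          (fun x hx => by
            have h2 := hx.2
            have h3 : min r (1-r) ≤ 1-r := min_le_right _ _
            norm_num at h2 ⊢
            linarith)
          (fun x hx => by have := hx.1; norm_num at this ⊢; linarith))
        (Set.mem_Icc.2 ⟨hs1, hs2⟩) hp' hq'
      have H' : (3:ℝ)*((1-r)+(-1)*s)^(1.55:ℝ) + 1*((0:ℝ)+1*s)^(1.55:ℝ)
          + r^(1.55:ℝ) < 0.92 := H
      rw [show (1-r)+(-1)*s = 1-s-r by ring, show (0:ℝ)+1*s = s by ring] at H'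
      linarith
    -- main step in a
    have hp' : (3:ℝ)*((0:ℝ)+1*(0:ℝ))^(1.55:ℝ) + 0*((0:ℝ)+0*(0:ℝ))^(1.55:ℝ)
        + (b^(1.55:ℝ) + r^(1.55:ℝ)) < 0.92 := by
      rw [show (0:ℝ)+1*(0:ℝ) = 0 by ring,
        Real.zero_rpow (by norm_num : (1.55:ℝ) ≠ 0)]
      linarith
    have hq' : (3:ℝ)*((0:ℝ)+1*(min b (1-b-r)))^(1.55:ℝ)
        + 0*((0:ℝ)+0*(min b (1-b-r)))^(1.55:ℝ) + (b^(1.55:ℝ) + r^(1.55:ℝ)) < 0.92 := by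
      rw [show (0:ℝ)+1*(min b (1-b-r)) = min b (1-b-r) by ring]
      rcases min_cases b (1-b-r) with ⟨m1, m2⟩ | ⟨m1, m2⟩
      · rw [m1]
        have := hA2a b hb0 (by linarith)
        linarith
      · rw [m1]
        have := hA2b b (by linarith) (le_min hbr (by linarith))
        linarith
    have H := maxseg
      (f := fun x => 3*((0:ℝ)+1*x)^(1.55:ℝ) + 0*((0:ℝ)+0*x)^(1.55:ℝ)
        + (b^(1.55:ℝ) + r^(1.55:ℝ)))
      (le_min hb0 (by linarith) : (0:ℝ) ≤ min b (1-b-r))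
      (conv2 (by norm_num) (by norm_num)
        (fun x hx => by have := hx.1; norm_num at this ⊢; linarith)
        (fun x hx => by norm_num))
      (Set.mem_Icc.2 ⟨ha, le_min hab (by linarith)⟩) hp' hq'
    have H' : (3:ℝ)*((0:ℝ)+1*a)^(1.55:ℝ) + 0*((0:ℝ)+0*a)^(1.55:ℝ)
        + (b^(1.55:ℝ) + r^(1.55:ℝ)) < 0.92 := H
    rw [show (0:ℝ)+1*a = a by ring] at H'
    linarith
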